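/- Suppose char F = 2. Let C be a self-dual 2-quasi-cyclic code of length 2n over F with Goursat data (C1, C2, C12, g). Then C is a dihedral code if and only if C̄1 = C2. -/

import Mathlib

set_option linter.unusedSectionVars false
set_option linter.unusedVariables false


noncomputable section

/-- The cyclic group of order `n`, written multiplicatively. -/
abbrev Zn (n : ℕ) := Multiplicative (ZMod n)

/-- The group algebra `FH` of the cyclic group of order `n` over `F`. -/
abbrev FH (F : Type*) [Field F] (n : ℕ) := MonoidAlgebra F (Zn n)

variable {F : Type*} [Field F] [Fintype F] {n : ℕ} [NeZero n]

/-- The "bar" map of the group algebra, induced by `x ↦ x⁻¹`. -/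
def bar (a : FH F n) : FH F n := MonoidAlgebra.ofCoeff (Finsupp.equivMapDomain (Equiv.inv (Zn n)) a.coeff)

/-- The inner product on `FH`: `⟨a, b⟩ = ∑ a_g * b_g`. -/
def innerFH (a b : FH F n) : F := ∑ g : Zn n, a.coeff g * b.coeff g

/-- The inner product on `FH × FH`. -/
def innerFH2 (a b : FH F n × FH F n) : F := innerFH a.1 b.1 + innerFH a.2 b.2

/-- `Ĉ₁₂ = {(c, c·g) : c ∈ C12}` as an `FH`-submodule of `FH × FH`. -/
def hatSub (C12 : Ideal (FH F n)) (g : FH F n) : Submodule (FH F n) (FH F n × FH F n) :=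
  Submodule.map (LinearMap.prod LinearMap.id (LinearMap.mulRight (FH F n) g)) C12

/-- A 2-quasi-cyclic code (an `FH`-submodule of `FH × FH`) is self-dual if it
equals its orthogonal complement. -/
def IsSelfDual (C : Submodule (FH F n) (FH F n × FH F n)) : Prop :=
  (C : Set (FH F n × FH F n)) = {v | ∀ c ∈ C, innerFH2 v c = 0}

/-- A 2-quasi-cyclic code is a dihedral code iff it is invariant under
`(a, a') ↦ (ā', ā)` (left multiplication by `y` in the dihedral group algebra). -/
def IsDihedral (C : Submodule (FH F n) (FH F n × FH F n)) : Prop :=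
  ∀ p ∈ C, (bar p.2, bar p.1) ∈ C

/-- A 2-quasi-cyclic code is a consta-dihedral code iff it is invariant under
`(a, a') ↦ (−ā', ā)` (left multiplication by `ỹ` in the consta-dihedral algebra). -/
def IsConstaDihedral (C : Submodule (FH F n) (FH F n × FH F n)) : Prop :=
  ∀ p ∈ C, (-(bar p.2), bar p.1) ∈ C

lemma FH_add_apply (a b : FH F n) (x : Zn n) : (a + b).coeff x = a.coeff x + b.coeff x := by
  rw [MonoidAlgebra.coeff_add, Finsupp.add_apply]

lemma bar_apply (a : FH F n) (x : Zn n) : (bar a).coeff x = a.coeff x⁻¹ := rfl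

lemma bar_eq_domCongr (a : FH F n) :
    bar a = MonoidAlgebra.domCongr F F (MulEquiv.inv (Zn n)) a := by
  ext x; simp [bar_apply]

lemma bar_mul (a b : FH F n) : bar (a * b) = bar a * bar b := by
  simp only [bar_eq_domCongr, map_mul]

lemma bar_bar (a : FH F n) : bar (bar a) = a := by
  ext x; rw [bar_apply, bar_apply, inv_inv]

lemma bar_add (a b : FH F n) : bar (a + b) = bar a + bar b := by
  ext x; simp [bar_apply, FH_add_apply]

lemma bar_zero : bar (0 : FH F n) = 0 := by
  ext x; simp [bar_apply]

lemma bar_one_coeff (a : FH F n) : (bar a).coeff 1 = a.coeff 1 := by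
  rw [bar_apply, inv_one]

lemma mul_apply_one' (a b : FH F n) : (a * b).coeff 1 = ∑ g : Zn n, a.coeff g * b.coeff g⁻¹ := by
  classical
  rw [MonoidAlgebra.coeff_mul, Finsupp.sum_fintype _ _ (by simp)]
  refine Finset.sum_congr rfl fun g _ => ?_
  rw [Finsupp.sum_fintype _ _ (by simp)]
  rw [Finset.sum_eq_single g⁻¹]
  · simp
  · intro h _ hne
    rw [if_neg]
    intro heq
    exact hne (eq_inv_of_mul_eq_one_right heq)
  · intro hmem; exact absurd (Finset.mem_univ _) hmem

lemma innerFH_eq (a b : FH F n) : innerFH a b = (a * bar b).coeff 1 := by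
  rw [mul_apply_one']
  exact Finset.sum_congr rfl fun g _ => by rw [bar_apply, inv_inv]

lemma innerFH_comm (a b : FH F n) : innerFH a b = innerFH b a := by
  simp [innerFH, mul_comm]

lemma innerFH_bar_left (a b : FH F n) : innerFH (bar a) b = innerFH a (bar b) := by
  rw [innerFH_eq, innerFH_eq, ← bar_mul, bar_one_coeff, bar_bar]

lemma innerFH_add_left (a b c : FH F n) :
    innerFH (a + b) c = innerFH a c + innerFH b c := by
  simp [innerFH, FH_add_apply, add_mul, Finset.sum_add_distrib]

lemma innerFH_add_right (a b c : FH F n) :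
    innerFH a (b + c) = innerFH a b + innerFH a c := by
  simp [innerFH, FH_add_apply, mul_add, Finset.sum_add_distrib]

lemma innerFH_zero_left (a : FH F n) : innerFH 0 a = 0 := by simp [innerFH]

lemma innerFH_zero_right (a : FH F n) : innerFH a 0 = 0 := by simp [innerFH]

/-- (char F = 2.) A self-dual 2-quasi-cyclic code `C` with Goursat data
`(C1, C2, C12, g)` is a dihedral code iff `C̄1 = C2`. -/
theorem self_dual_dihedral_iff_char_two (F : Type*) [Field F] [Fintype F] (n : ℕ) [NeZero n]
    (hn : 1 < n) (hcop : Nat.Coprime n (Fintype.card F))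
    (hchar : ringChar F = 2)
    (C : Submodule (FH F n) (FH F n × FH F n))
    (C1 C2 C12 : Ideal (FH F n)) (e g h : FH F n)
    (h112 : C1 ⊓ C12 = ⊥) (h212 : C2 ⊓ C12 = ⊥)
    (heC : e ∈ C12) (hspan : C12 = Ideal.span {e}) (hid : ∀ c ∈ C12, e * c = c)
    (hg : g ∈ C12) (hh : h ∈ C12) (hgh : g * h = e)
    (hC : C = Submodule.prod C1 C2 ⊔ hatSub C12 g)
    (hsd : IsSelfDual C) :
    IsDihedral C ↔ bar '' (C1 : Set (FH F n)) = (C2 : Set (FH F n)) := by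
  -- generators membership
  have hmem1 : ∀ a ∈ C1, ((a, 0) : FH F n × FH F n) ∈ C := by
    intro a ha
    rw [hC]
    exact Submodule.mem_sup_left (Submodule.mem_prod.mpr ⟨ha, Submodule.zero_mem _⟩)
  have hmem2 : ∀ b ∈ C2, ((0, b) : FH F n × FH F n) ∈ C := by
    intro b hb
    rw [hC]
    exact Submodule.mem_sup_left (Submodule.mem_prod.mpr ⟨Submodule.zero_mem _, hb⟩)
  have hmemh : ∀ c ∈ C12, ((c, c * g) : FH F n × FH F n) ∈ C := by
    intro c hc
    rw [hC]
    exact Submodule.mem_sup_right ⟨c, hc, rfl⟩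
  -- decomposition of elements of C
  have hdecomp : ∀ p ∈ C, ∃ a ∈ C1, ∃ b ∈ C2, ∃ c ∈ C12, p = (a + c, b + c * g) := by
    intro p hp
    rw [hC] at hp
    obtain ⟨y, hy, z, hz, hyz⟩ := Submodule.mem_sup.mp hp
    obtain ⟨c, hc, rfl⟩ := Submodule.mem_map.mp hz
    refine ⟨y.1, (Submodule.mem_prod.mp hy).1, y.2, (Submodule.mem_prod.mp hy).2, c, hc, ?_⟩
    rw [← hyz]
    rfl
  -- recovering C1 and C2 from C
  have mem1' : ∀ a : FH F n, ((a, 0) : FH F n × FH F n) ∈ C → a ∈ C1 := by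
    intro a hp
    obtain ⟨a1, ha1, b1, hb1, c, hc, heq⟩ := hdecomp _ hp
    rw [Prod.mk.injEq] at heq
    obtain ⟨h1, h2⟩ := heq
    have hcg : c * g ∈ C2 ⊓ C12 := by
      constructor
      · have h4 : c * g = -b1 := by linear_combination -h2
        rw [h4]; exact Submodule.neg_mem _ hb1
      · exact Ideal.mul_mem_right g _ hc
    rw [h212] at hcg
    have hcg0 : c * g = 0 := (Submodule.mem_bot _).mp hcg
    have hc0 : c = 0 := by
      calc c = e * c := (hid c hc).symm
        _ = h * (c * g) := by rw [← hgh]; ring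
        _ = 0 := by rw [hcg0, mul_zero]
    rw [h1, hc0, add_zero]
    exact ha1
  have mem2' : ∀ b : FH F n, ((0, b) : FH F n × FH F n) ∈ C → b ∈ C2 := by
    intro b hp
    obtain ⟨a1, ha1, b1, hb1, c, hc, heq⟩ := hdecomp _ hp
    rw [Prod.mk.injEq] at heq
    obtain ⟨h1, h2⟩ := heq
    have hcm : c ∈ C1 ⊓ C12 := by
      constructor
      · have h4 : c = -a1 := by linear_combination -h1
        rw [h4]; exact Submodule.neg_mem _ ha1
      · exact hc
    rw [h112] at hcm
    have hc0 : c = 0 := (Submodule.mem_bot _).mp hcm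
    rw [h2, hc0, zero_mul, add_zero]
    exact hb1
  constructor
  · -- dihedral → bar C1 = C2
    intro hd
    apply Set.Subset.antisymm
    · rintro _ ⟨a, ha, rfl⟩
      have := hd (a, 0) (hmem1 a ha)
      simp only [bar_zero] at this
      exact mem2' _ this
    · intro b hb
      have := hd (0, b) (hmem2 b hb)
      simp only [bar_zero] at this
      exact ⟨bar b, mem1' _ this, bar_bar b⟩
  · -- bar C1 = C2 → dihedral
    intro hbar
    -- orthogonality
    have horth : ∀ u ∈ C, ∀ v ∈ C, innerFH2 u v = 0 := by
      intro u hu v hv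
      have hu' : u ∈ (C : Set (FH F n × FH F n)) := hu
      rw [hsd] at hu'
      exact hu' v hv
    have hC1toC2 : ∀ a ∈ C1, bar a ∈ C2 := by
      intro a ha
      have : bar a ∈ (C2 : Set (FH F n)) := hbar ▸ ⟨a, ha, rfl⟩
      exact this
    have hC2toC1 : ∀ b ∈ C2, bar b ∈ C1 := by
      intro b hb
      have hb' : b ∈ (C2 : Set (FH F n)) := hb
      rw [← hbar] at hb'
      obtain ⟨a, ha, rfl⟩ := hb'
      rwa [bar_bar]
    have o11 : ∀ a ∈ C1, ∀ b ∈ C1, innerFH a b = 0 := by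
      intro a ha b hb
      have := horth _ (hmem1 a ha) _ (hmem1 b hb)
      simpa [innerFH2, innerFH_zero_left] using this
    have o22 : ∀ a ∈ C2, ∀ b ∈ C2, innerFH a b = 0 := by
      intro a ha b hb
      have := horth _ (hmem2 a ha) _ (hmem2 b hb)
      simpa [innerFH2, innerFH_zero_left] using this
    have o1h : ∀ a ∈ C1, ∀ c ∈ C12, innerFH a c = 0 := by
      intro a ha c hc
      have := horth _ (hmem1 a ha) _ (hmemh c hc)
      simpa [innerFH2, innerFH_zero_left] using this
    have o2h : ∀ b ∈ C2, ∀ c ∈ C12, innerFH b (c * g) = 0 := by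
      intro b hb c hc
      have := horth _ (hmem2 b hb) _ (hmemh c hc)
      simpa [innerFH2, innerFH_zero_left, innerFH_zero_right] using this
    have h2 : (2 : F) = 0 := by
      have := ringChar.Nat.cast_ringChar (R := F)
      rw [hchar] at this
      exact_mod_cast this
    have char2 : ∀ x : F, x + x = 0 := by
      intro x; rw [← two_mul, h2, zero_mul]
    intro p hp
    obtain ⟨a1, ha1, b1, hb1, c, hc, rfl⟩ := hdecomp p hp
    have hgoal : ((bar (b1 + c * g), bar (a1 + c)) : FH F n × FH F n) ∈
        (C : Set (FH F n × FH F n)) := by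
      rw [hsd]
      intro q hq
      obtain ⟨a2, ha2, b2, hb2, d, hd, rfl⟩ := hdecomp q hq
      show innerFH (bar (b1 + c * g)) (a2 + d) + innerFH (bar (a1 + c)) (b2 + d * g) = 0
      rw [bar_add, bar_add]
      simp only [innerFH_add_left, innerFH_add_right]
      have e1 : innerFH (bar b1) a2 = 0 := o11 _ (hC2toC1 _ hb1) _ ha2
      have e2 : innerFH (bar b1) d = 0 := o1h _ (hC2toC1 _ hb1) _ hd
      have e3 : innerFH (bar (c * g)) a2 = 0 := by
        rw [innerFH_bar_left, innerFH_comm]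
        exact o2h _ (hC1toC2 _ ha2) _ hc
      have e5 : innerFH (bar a1) b2 = 0 := o22 _ (hC1toC2 _ ha1) _ hb2
      have e6 : innerFH (bar a1) (d * g) = 0 := o2h _ (hC1toC2 _ ha1) _ hd
      have e7 : innerFH (bar c) b2 = 0 := by
        rw [innerFH_bar_left, innerFH_comm]
        exact o1h _ (hC2toC1 _ hb2) _ hc
      have e48 : innerFH (bar (c * g)) d = innerFH (bar c) (d * g) := by
        rw [innerFH_bar_left, innerFH_bar_left, innerFH_eq, innerFH_eq, bar_bar, bar_bar]
        congr 1
        ring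
      rw [e1, e2, e3, e5, e6, e7, e48]
      simp only [zero_add, add_zero]
      exact char2 _
    exact hgoal
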